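/- Let M and N be nonzero commutative binoids of finite combinatorial dimension. Then dim(M ∧ N) = dim M + dim N, where M ∧ N is the smash product over the trivial binoid. -/

import Mathlib

/-!  Basic theory of (commutative) binoids: a commutative monoid together with
an absorbing element `infty`.  We use a bundled structure `BinoidOn X`. -/

structure BinoidOn (X : Type u) where
  add : X → X → X
  zero : X
  infty : X
  add_assoc : ∀ a b c : X, add (add a b) c = add a (add b c)
  add_comm : ∀ a b : X, add a b = add b a
  zero_add : ∀ a : X, add zero a = a
  infty_add : ∀ a : X, add infty a = infty

namespace BinoidOn

variable {X : Type u} {Y : Type v} (B : BinoidOn X) (C : BinoidOn Y)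

/-- `n`-fold multiple `n • a`. -/
def smul (B : BinoidOn X) : ℕ → X → X
  | 0, _ => B.zero
  | n + 1, a => B.add a (smul B n a)

/-- Sum of a list of elements. -/
def listSum (l : List X) : X := l.foldr B.add B.zero

/-- An ideal of a binoid: a nonempty subset `I` with `I + N ⊆ I`. -/
def IsIdeal (I : Set X) : Prop := I.Nonempty ∧ ∀ a ∈ I, ∀ x : X, B.add a x ∈ I

/-- A subbinoid: a submonoid containing `infty`. -/
def IsSubbinoid (M : Set X) : Prop :=
  B.zero ∈ M ∧ B.infty ∈ M ∧ ∀ a ∈ M, ∀ b ∈ M, B.add a b ∈ M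

/-- The set of units. -/
def unitsSet : Set X := {u | ∃ a, B.add u a = B.zero}

/-- `N₊`, the ideal of non-units. -/
def nplus : Set X := (B.unitsSet)ᶜ

/-- The ideal generated by a set. -/
def genIdeal (S : Set X) : Set X := {x | ∃ a ∈ S, ∃ n, x = B.add a n}

/-- The `n`-fold sum `nI = {a₁ + ⋯ + aₙ | aᵢ ∈ I}`. -/
def nSum (n : ℕ) (I : Set X) : Set X :=
  {x | ∃ l : List X, l.length = n ∧ (∀ a ∈ l, a ∈ I) ∧ x = B.listSum l}

/-- The Frobenius power `[q]I`: the ideal generated by `{q • a | a ∈ I}`. -/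
def frob (q : ℕ) (I : Set X) : Set X := B.genIdeal {x | ∃ a ∈ I, x = B.smul q a}

/-- The radical of an ideal. -/
def radical (I : Set X) : Set X := {a | ∃ n : ℕ, 0 < n ∧ B.smul n a ∈ I}

/-- `N₊`-primary ideal. -/
def IsPrimary (I : Set X) : Prop := B.radical I = B.nplus

/-- Finitely generated binoid. -/
def FG : Prop :=
  ∃ G : Finset X, ∀ x : X, x = B.infty ∨ ∃ l : List X, (∀ a ∈ l, a ∈ G) ∧ x = B.listSum l

/-- Semipositive: a nonzero binoid with finitely many units. -/
def Semipositive : Prop := B.zero ≠ B.infty ∧ B.unitsSet.Finite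

/-- Prime ideal. -/
def IsPrime (P : Set X) : Prop :=
  B.IsIdeal P ∧ P ≠ Set.univ ∧ ∀ a b : X, B.add a b ∈ P → a ∈ P ∨ b ∈ P

/-- The (combinatorial) dimension of the binoid is `d`: there is a strictly
increasing chain of prime ideals of length `d`, and no longer one. -/
def HasDim (d : ℕ) : Prop :=
  (∃ c : Fin (d + 1) → Set X, StrictMono c ∧ ∀ i, B.IsPrime (c i)) ∧
    ∀ (k : ℕ) (c : Fin (k + 1) → Set X), StrictMono c → (∀ i, B.IsPrime (c i)) → k ≤ d

end BinoidOn

/-- The setoid collapsing a subset `A` to a single point (Rees congruence). -/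
def collapseSetoid {X : Type u} (A : Set X) : Setoid X where
  r x y := x = y ∨ (x ∈ A ∧ y ∈ A)
  iseqv := ⟨fun _ => Or.inl rfl,
    fun h => h.elim (fun e => Or.inl e.symm) (fun h => Or.inr ⟨h.2, h.1⟩),
    fun h1 h2 => by
      rcases h1 with rfl | h1
      · exact h2
      · rcases h2 with rfl | h2
        · exact Or.inr h1
        · exact Or.inr ⟨h1.1, h2.2⟩⟩

namespace BinoidOn

variable {X : Type u} {Y : Type v} (B : BinoidOn X) (C : BinoidOn Y)

/-- The underlying set of the Rees quotient `N/I` (we collapse the ideal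
generated by `I`; for an ideal `I` this is `I` itself). -/
abbrev ReesQuot (I : Set X) : Type u := Quotient (collapseSetoid (B.genIdeal I))

lemma genIdeal_closed {I : Set X} {a : X} (ha : a ∈ B.genIdeal I) (x : X) :
    B.add a x ∈ B.genIdeal I := by
  obtain ⟨b, hb, n, rfl⟩ := ha
  exact ⟨b, hb, B.add n x, (B.add_assoc b n x)⟩

/-- The Rees quotient binoid `N/I`. -/
def quotB (I : Set X) : BinoidOn (B.ReesQuot I) where
  add := Quotient.map₂ B.add (by
    rintro a a' (rfl | ⟨ha, ha'⟩) b b' (rfl | ⟨hb, hb'⟩)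
    · exact Or.inl rfl
    · exact Or.inr ⟨by rw [B.add_comm]; exact B.genIdeal_closed hb _,
        by rw [B.add_comm]; exact B.genIdeal_closed hb' _⟩
    · exact Or.inr ⟨B.genIdeal_closed ha _, B.genIdeal_closed ha' _⟩
    · exact Or.inr ⟨B.genIdeal_closed ha _, B.genIdeal_closed ha' _⟩)
  zero := Quotient.mk _ B.zero
  infty := Quotient.mk _ B.infty
  add_assoc := by
    rintro ⟨a⟩ ⟨b⟩ ⟨c⟩
    exact congrArg (Quotient.mk _) (B.add_assoc a b c)
  add_comm := by
    rintro ⟨a⟩ ⟨b⟩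
    exact congrArg (Quotient.mk _) (B.add_comm a b)
  zero_add := by
    rintro ⟨a⟩
    exact congrArg (Quotient.mk _) (B.zero_add a)
  infty_add := by
    rintro ⟨a⟩
    exact congrArg (Quotient.mk _) (B.infty_add a)

/-- The underlying set of `N/[q]N₊`. -/
abbrev hkQuot (q : ℕ) : Type u := Quotient (collapseSetoid (B.frob q B.nplus))

/-- The Hilbert–Kunz function `HKF(N,q) = #(N/[q]N₊)`, where `#S = |S| - 1`. -/
noncomputable def hkf (q : ℕ) : ℕ := Nat.card (B.hkQuot q) - 1

/-- Pairs with an `infty` coordinate. -/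
def inftyPairs : Set (X × Y) := {p | p.1 = B.infty ∨ p.2 = C.infty}

/-- Carrier of the smash product `M ∧ N`. -/
abbrev SmashCarrier : Type _ := Quotient (collapseSetoid (B.inftyPairs C))

lemma inftyPairs_add_left {p q : X × Y} (hp : p ∈ B.inftyPairs C) :
    (B.add p.1 q.1, C.add p.2 q.2) ∈ B.inftyPairs C := by
  rcases hp with h | h
  · exact Or.inl (by rw [h, B.infty_add])
  · exact Or.inr (by rw [h, C.infty_add])

lemma inftyPairs_add_right {p q : X × Y} (hq : q ∈ B.inftyPairs C) :
    (B.add p.1 q.1, C.add p.2 q.2) ∈ B.inftyPairs C := by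
  rcases hq with h | h
  · exact Or.inl (by rw [h, B.add_comm, B.infty_add])
  · exact Or.inr (by rw [h, C.add_comm, C.infty_add])

/-- The smash product binoid `M ∧ N`. -/
def smash : BinoidOn (B.SmashCarrier C) where
  add := Quotient.map₂ (fun p q => (B.add p.1 q.1, C.add p.2 q.2)) (by
    rintro p p' (rfl | ⟨hp, hp'⟩) q q' (rfl | ⟨hq, hq'⟩)
    · exact Or.inl rfl
    · exact Or.inr ⟨B.inftyPairs_add_right C hq, B.inftyPairs_add_right C hq'⟩
    · exact Or.inr ⟨B.inftyPairs_add_left C hp, B.inftyPairs_add_left C hp'⟩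
    · exact Or.inr ⟨B.inftyPairs_add_left C hp, B.inftyPairs_add_left C hp'⟩)
  zero := Quotient.mk _ (B.zero, C.zero)
  infty := Quotient.mk _ (B.infty, C.infty)
  add_assoc := by
    rintro ⟨a⟩ ⟨b⟩ ⟨c⟩
    exact congrArg (Quotient.mk _)
      (Prod.ext (B.add_assoc _ _ _) (C.add_assoc _ _ _))
  add_comm := by
    rintro ⟨a⟩ ⟨b⟩
    exact congrArg (Quotient.mk _)
      (Prod.ext (B.add_comm _ _) (C.add_comm _ _))
  zero_add := by
    rintro ⟨a⟩
    exact congrArg (Quotient.mk _)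
      (Prod.ext (B.zero_add _) (C.zero_add _))
  infty_add := by
    rintro ⟨a⟩
    exact congrArg (Quotient.mk _)
      (Prod.ext (B.infty_add _) (C.infty_add _))

end BinoidOn

/-- An `N`-set: a pointed set with an operation of the binoid. -/
structure NSetOn {X : Type u} (B : BinoidOn X) (S : Type w) where
  pt : S
  act : X → S → S
  act_zero : ∀ s, act B.zero s = s
  act_infty : ∀ s, act B.infty s = pt
  act_pt : ∀ n, act n pt = pt
  act_add : ∀ n m s, act (B.add n m) s = act n (act m s)

section NSet

variable {X : Type u} {S : Type w} {B : BinoidOn X}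

/-- One step of the connectedness relation on `S ∖ {p}`. -/
def NStep (σ : NSetOn B S) (s t : S) : Prop :=
  s ≠ σ.pt ∧ t ≠ σ.pt ∧ ∃ n, n ≠ B.infty ∧ (σ.act n s = t ∨ σ.act n t = s)

/-- The connectedness (equivalence) relation `∼_N` on `S ∖ {p}`. -/
def NConn (σ : NSetOn B S) : S → S → Prop := Relation.ReflTransGen (NStep σ)

/-- `N`-subsets of an `N`-set. -/
def IsNSubset (σ : NSetOn B S) (T : Set S) : Prop :=
  σ.pt ∈ T ∧ ∀ n : X, ∀ s ∈ T, σ.act n s ∈ T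

/-- `T` is a pointed union of two nontrivial `N`-subsets. -/
def IsReducibleSet (σ : NSetOn B S) (T : Set S) : Prop :=
  ∃ A A' : Set S, IsNSubset σ A ∧ IsNSubset σ A' ∧
    A ≠ {σ.pt} ∧ A' ≠ {σ.pt} ∧ A ∪ A' = T ∧ A ∩ A' = {σ.pt}

/-- An irreducible `N`-subset. -/
def IsIrreducibleSet (σ : NSetOn B S) (T : Set S) : Prop :=
  IsNSubset σ T ∧ T ≠ {σ.pt} ∧ ¬ IsReducibleSet σ T

end NSet

/-- The trivial binoid `{0, ∞}`, realized on `Bool` (`false = 0`, `true = ∞`). -/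
def trivB : BinoidOn Bool where
  add := or
  zero := false
  infty := true
  add_assoc := by decide
  add_comm := by decide
  zero_add := by decide
  infty_add := by decide

/-- The binoid `M^∞` obtained from a commutative monoid by adjoining `∞ = ⊤`. -/
def withTopBinoid (M : Type u) [AddCommMonoid M] : BinoidOn (WithTop M) where
  add := (· + ·)
  zero := 0
  infty := ⊤
  add_assoc := add_assoc
  add_comm := add_comm
  zero_add := zero_add
  infty_add := fun a => WithTop.top_add a


namespace BinoidOn

variable {X : Type u} {Y : Type v} (B : BinoidOn X) (C : BinoidOn Y)

lemma add_zero' (x : X) : B.add x B.zero = x := by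
  rw [B.add_comm]; exact B.zero_add x

lemma add_infty' (x : X) : B.add x B.infty = B.infty := by
  rw [B.add_comm]; exact B.infty_add x

lemma infty_mem_ideal {I : Set X} (h : B.IsIdeal I) : B.infty ∈ I := by
  obtain ⟨⟨x, hx⟩, hcl⟩ := h
  have := hcl x hx B.infty
  rwa [B.add_infty'] at this

lemma zero_not_mem_prime {P : Set X} (h : B.IsPrime P) : B.zero ∉ P := by
  intro h0
  apply h.2.1
  ext x
  simp only [Set.mem_univ, iff_true]
  have := h.1.2 B.zero h0 x
  rwa [B.zero_add] at this

/-- The prime ideal `(P ∧ N) ∪ (M ∧ Q)` of the smash product. -/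
def primeF (P : Set X) (Q : Set Y) : Set (B.SmashCarrier C) :=
  Quotient.mk (collapseSetoid (B.inftyPairs C)) '' {p | p.1 ∈ P ∨ p.2 ∈ Q}

lemma smash_mk_add (p q : X × Y) :
    (B.smash C).add (Quotient.mk (collapseSetoid (B.inftyPairs C)) p)
        (Quotient.mk (collapseSetoid (B.inftyPairs C)) q) =
      Quotient.mk (collapseSetoid (B.inftyPairs C)) (B.add p.1 q.1, C.add p.2 q.2) := rfl

lemma mem_primeF {P : Set X} {Q : Set Y} (hP : B.infty ∈ P) (hQ : C.infty ∈ Q) (p : X × Y) :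
    Quotient.mk (collapseSetoid (B.inftyPairs C)) p ∈ B.primeF C P Q ↔ p.1 ∈ P ∨ p.2 ∈ Q := by
  constructor
  · rintro ⟨p', hp', hpe⟩
    rcases Quotient.exact hpe with rfl | ⟨_, hin⟩
    · exact hp'
    · rcases hin with h | h
      · exact Or.inl (by rw [h]; exact hP)
      · exact Or.inr (by rw [h]; exact hQ)
  · intro h
    exact ⟨p, h, rfl⟩

lemma primeF_isPrime {P : Set X} {Q : Set Y} (hP : B.IsPrime P) (hQ : C.IsPrime Q) :
    (B.smash C).IsPrime (B.primeF C P Q) := by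
  have hPi := B.infty_mem_ideal hP.1
  have hQi := C.infty_mem_ideal hQ.1
  refine ⟨⟨⟨Quotient.mk _ (B.infty, C.infty),
      (B.mem_primeF C hPi hQi _).2 (Or.inl hPi)⟩, ?_⟩, ?_, ?_⟩
  · rintro z hz w
    obtain ⟨p, hp, rfl⟩ := hz
    obtain ⟨q, rfl⟩ := Quotient.exists_rep w
    rw [B.smash_mk_add C]
    refine (B.mem_primeF C hPi hQi _).2 ?_
    rcases hp with h | h
    · exact Or.inl (hP.1.2 _ h _)
    · exact Or.inr (hQ.1.2 _ h _)
  · intro he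
    have h0 : Quotient.mk (collapseSetoid (B.inftyPairs C)) (B.zero, C.zero)
        ∈ B.primeF C P Q := by rw [he]; exact Set.mem_univ _
    rcases (B.mem_primeF C hPi hQi _).1 h0 with h | h
    · exact B.zero_not_mem_prime hP h
    · exact C.zero_not_mem_prime hQ h
  · intro z w hzw
    obtain ⟨p, rfl⟩ := Quotient.exists_rep z
    obtain ⟨q, rfl⟩ := Quotient.exists_rep w
    rw [B.smash_mk_add C] at hzw
    rcases (B.mem_primeF C hPi hQi _).1 hzw with h | h
    · rcases hP.2.2 _ _ h with h | h
      · exact Or.inl ((B.mem_primeF C hPi hQi _).2 (Or.inl h))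
      · exact Or.inr ((B.mem_primeF C hPi hQi _).2 (Or.inl h))
    · rcases hQ.2.2 _ _ h with h | h
      · exact Or.inl ((B.mem_primeF C hPi hQi _).2 (Or.inr h))
      · exact Or.inr ((B.mem_primeF C hPi hQi _).2 (Or.inr h))

lemma primeF_le {P P' : Set X} {Q Q' : Set Y} (h1 : P ⊆ P') (h2 : Q ⊆ Q') :
    B.primeF C P Q ⊆ B.primeF C P' Q' :=
  Set.image_mono (fun p hp => hp.imp (fun h => h1 h) (fun h => h2 h))

lemma primeF_lt {P P' : Set X} {Q Q' : Set Y} (hP : B.IsPrime P) (hP' : B.IsPrime P')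
    (hQ : C.IsPrime Q) (hQ' : C.IsPrime Q')
    (h1 : P ⊆ P') (h2 : Q ⊆ Q') (h3 : P ≠ P' ∨ Q ≠ Q') :
    B.primeF C P Q < B.primeF C P' Q' := by
  have hPi := B.infty_mem_ideal hP.1
  have hQi := C.infty_mem_ideal hQ.1
  have hPi' := B.infty_mem_ideal hP'.1
  have hQi' := C.infty_mem_ideal hQ'.1
  refine lt_of_le_of_ne (B.primeF_le C h1 h2) ?_
  rcases h3 with h3 | h3
  · obtain ⟨x, hx', hx⟩ : ∃ x, x ∈ P' ∧ x ∉ P := by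
      by_contra h
      push_neg at h
      exact h3 (Set.Subset.antisymm h1 h)
    intro he
    have hm : Quotient.mk (collapseSetoid (B.inftyPairs C)) (x, C.zero)
        ∈ B.primeF C P Q := by
      rw [he]; exact (B.mem_primeF C hPi' hQi' _).2 (Or.inl hx')
    rcases (B.mem_primeF C hPi hQi _).1 hm with h | h
    · exact hx h
    · exact C.zero_not_mem_prime hQ h
  · obtain ⟨y, hy', hy⟩ : ∃ y, y ∈ Q' ∧ y ∉ Q := by
      by_contra h
      push_neg at h
      exact h3 (Set.Subset.antisymm h2 h)
    intro he
    have hm : Quotient.mk (collapseSetoid (B.inftyPairs C)) (B.zero, y)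
        ∈ B.primeF C P Q := by
      rw [he]; exact (B.mem_primeF C hPi' hQi' _).2 (Or.inr hy')
    rcases (B.mem_primeF C hPi hQi _).1 hm with h | h
    · exact B.zero_not_mem_prime hP h
    · exact hy h

/-- Every prime of the smash product decomposes as `primeF` of two primes. -/
lemma prime_decomp {P : Set (B.SmashCarrier C)} (hP : (B.smash C).IsPrime P) :
    B.IsPrime {x | Quotient.mk (collapseSetoid (B.inftyPairs C)) (x, C.zero) ∈ P} ∧
      C.IsPrime {y | Quotient.mk (collapseSetoid (B.inftyPairs C)) (B.zero, y) ∈ P} ∧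
      P = B.primeF C {x | Quotient.mk (collapseSetoid (B.inftyPairs C)) (x, C.zero) ∈ P}
        {y | Quotient.mk (collapseSetoid (B.inftyPairs C)) (B.zero, y) ∈ P} := by
  have hIP : Quotient.mk (collapseSetoid (B.inftyPairs C)) (B.infty, C.zero) ∈ P := by
    have he : Quotient.mk (collapseSetoid (B.inftyPairs C)) (B.infty, C.zero)
        = (B.smash C).infty := Quotient.sound (Or.inr ⟨Or.inl rfl, Or.inl rfl⟩)
    rw [he]
    exact (B.smash C).infty_mem_ideal hP.1
  have hIQ : Quotient.mk (collapseSetoid (B.inftyPairs C)) (B.zero, C.infty) ∈ P := by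
    have he : Quotient.mk (collapseSetoid (B.inftyPairs C)) (B.zero, C.infty)
        = (B.smash C).infty := Quotient.sound (Or.inr ⟨Or.inr rfl, Or.inl rfl⟩)
    rw [he]
    exact (B.smash C).infty_mem_ideal hP.1
  have hz := (B.smash C).zero_not_mem_prime hP
  have hp : B.IsPrime {x | Quotient.mk (collapseSetoid (B.inftyPairs C)) (x, C.zero) ∈ P} := by
    refine ⟨⟨⟨B.infty, hIP⟩, ?_⟩, ?_, ?_⟩
    · intro x hx t
      have h := hP.1.2 _ hx (Quotient.mk (collapseSetoid (B.inftyPairs C)) (t, C.zero))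
      rw [B.smash_mk_add C] at h
      simpa only [Set.mem_setOf_eq, C.zero_add] using h
    · intro he
      have h0 : B.zero ∈ {x | Quotient.mk (collapseSetoid (B.inftyPairs C)) (x, C.zero) ∈ P} := by
        rw [he]; exact Set.mem_univ _
      exact hz h0
    · intro x x' h
      have he : (B.smash C).add (Quotient.mk (collapseSetoid (B.inftyPairs C)) (x, C.zero))
          (Quotient.mk (collapseSetoid (B.inftyPairs C)) (x', C.zero))
          = Quotient.mk (collapseSetoid (B.inftyPairs C)) (B.add x x', C.zero) := by
        rw [B.smash_mk_add C, C.zero_add]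
      exact hP.2.2 _ _ (by rw [he]; exact h)
  have hq : C.IsPrime {y | Quotient.mk (collapseSetoid (B.inftyPairs C)) (B.zero, y) ∈ P} := by
    refine ⟨⟨⟨C.infty, hIQ⟩, ?_⟩, ?_, ?_⟩
    · intro y hy t
      have h := hP.1.2 _ hy (Quotient.mk (collapseSetoid (B.inftyPairs C)) (B.zero, t))
      rw [B.smash_mk_add C] at h
      simpa only [Set.mem_setOf_eq, B.zero_add] using h
    · intro he
      have h0 : C.zero ∈ {y | Quotient.mk (collapseSetoid (B.inftyPairs C)) (B.zero, y) ∈ P} := by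
        rw [he]; exact Set.mem_univ _
      exact hz h0
    · intro y y' h
      have he : (B.smash C).add (Quotient.mk (collapseSetoid (B.inftyPairs C)) (B.zero, y))
          (Quotient.mk (collapseSetoid (B.inftyPairs C)) (B.zero, y'))
          = Quotient.mk (collapseSetoid (B.inftyPairs C)) (B.zero, C.add y y') := by
        rw [B.smash_mk_add C, B.zero_add]
      exact hP.2.2 _ _ (by rw [he]; exact h)
  refine ⟨hp, hq, ?_⟩
  ext z
  obtain ⟨⟨x, y⟩, rfl⟩ := Quotient.exists_rep z
  rw [B.mem_primeF C hIP hIQ]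
  constructor
  · intro h
    have hsplit : Quotient.mk (collapseSetoid (B.inftyPairs C)) ((x, y) : X × Y)
        = (B.smash C).add (Quotient.mk (collapseSetoid (B.inftyPairs C)) (x, C.zero))
          (Quotient.mk (collapseSetoid (B.inftyPairs C)) (B.zero, y)) := by
      rw [B.smash_mk_add C, B.add_zero', C.zero_add]
    exact hP.2.2 _ _ (by rw [← hsplit]; exact h)
  · rintro (h | h)
    · have hcl := hP.1.2 _ h (Quotient.mk (collapseSetoid (B.inftyPairs C)) (B.zero, y))
      rw [B.smash_mk_add C, B.add_zero', C.zero_add] at hcl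
      exact hcl
    · have hcl := hP.1.2 _ h (Quotient.mk (collapseSetoid (B.inftyPairs C)) (x, C.zero))
      rw [B.smash_mk_add C, C.add_zero', B.zero_add] at hcl
      exact hcl

open Classical in
/-- The number of jump steps of a monotone chain of primes is at most the dimension. -/
lemma jumps_le {a k : ℕ}
    (hub : ∀ (m : ℕ) (c : Fin (m + 1) → Set X), StrictMono c → (∀ i, B.IsPrime (c i)) → m ≤ a)
    (p : Fin (k + 1) → Set X) (hmono : Monotone p) (hprime : ∀ i, B.IsPrime (p i)) :
    (Finset.univ.filter (fun i : Fin k => p i.castSucc ≠ p i.succ)).card ≤ a := by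
  set J := Finset.univ.filter (fun i : Fin k => p i.castSucc ≠ p i.succ) with hJ
  set s := J.card with hs
  have hjump : ∀ t : Fin k, t ∈ J → p t.castSucc < p t.succ := by
    intro t ht
    have hne := (Finset.mem_filter.1 ht).2
    exact lt_of_le_of_ne (hmono (le_of_lt (show t.castSucc < t.succ from Fin.castSucc_lt_succ))) hne
  let σ := J.orderIsoOfFin hs.symm
  set e : Fin (s + 1) → Set X := fun i =>
    if h : i.val = 0 then p 0
    else p (Fin.succ (σ ⟨i.val - 1, by have := i.isLt; omega⟩ : Fin k)) with he
  have heval : ∀ (i : Fin (s + 1)) (h : i.val ≠ 0),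
      e i = p (Fin.succ (σ ⟨i.val - 1, by have := i.isLt; omega⟩ : Fin k)) := by
    intro i h
    simp only [he, dif_neg h]
  have hes : StrictMono e := by
    intro i j hij
    have hij' : i.val < j.val := hij
    have hj0 : j.val ≠ 0 := by omega
    rw [heval j hj0]
    set jm : Fin s := ⟨j.val - 1, by have := j.isLt; omega⟩ with hjm
    have hjmem : (σ jm : Fin k) ∈ J := (σ jm).2
    by_cases hi0 : i.val = 0
    · have : e i = p 0 := by simp only [he, dif_pos hi0]
      rw [this]
      calc p 0 ≤ p (σ jm : Fin k).castSucc := hmono (Fin.zero_le _)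
        _ < p (Fin.succ (σ jm : Fin k)) := hjump _ hjmem
    · rw [heval i hi0]
      set im : Fin s := ⟨i.val - 1, by have := i.isLt; omega⟩ with him
      have hlt : im < jm := by
        simp only [him, hjm, Fin.mk_lt_mk]
        omega
      have hσ : (σ im : Fin k) < (σ jm : Fin k) := σ.strictMono hlt
      have hle : Fin.succ (σ im : Fin k) ≤ (σ jm : Fin k).castSucc := by
        rw [Fin.le_def]
        simp only [Fin.val_succ, Fin.coe_castSucc]
        exact hσ
      calc p (Fin.succ (σ im : Fin k)) ≤ p (σ jm : Fin k).castSucc := hmono hle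
        _ < p (Fin.succ (σ jm : Fin k)) := hjump _ hjmem
  have hep : ∀ i, B.IsPrime (e i) := by
    intro i
    by_cases hi0 : i.val = 0
    · simp only [he, dif_pos hi0]; exact hprime _
    · rw [heval i hi0]; exact hprime _
  exact hub s e hes hep

end BinoidOn

/-- For nonzero commutative binoids `M, N` of finite combinatorial
dimension, `dim (M ∧ N) = dim M + dim N`. -/
theorem stmt10 {X Y : Type} (B : BinoidOn X) (C : BinoidOn Y)
    (hX : B.zero ≠ B.infty) (hY : C.zero ≠ C.infty)
    (a b : ℕ) (hA : B.HasDim a) (hB : C.HasDim b) :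
    (B.smash C).HasDim (a + b) := by
  obtain ⟨⟨cp, hcp, hcpP⟩, hAub⟩ := hA
  obtain ⟨⟨cq, hcq, hcqP⟩, hBub⟩ := hB
  constructor
  · -- the chain of length `a + b`
    refine ⟨fun i => B.primeF C (cp ⟨min i.val a, by omega⟩)
      (cq ⟨i.val - a, by have := i.isLt; omega⟩), ?_, ?_⟩
    · intro i j hij
      have hij' : i.val < j.val := hij
      have hi := i.isLt
      have hj := j.isLt
      refine B.primeF_lt C (hcpP _) (hcpP _) (hcqP _) (hcqP _) ?_ ?_ ?_
      · exact hcp.monotone (Fin.mk_le_mk.mpr (by omega))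
      · exact hcq.monotone (Fin.mk_le_mk.mpr (by omega))
      · by_cases hja : j.val ≤ a
        · exact Or.inl (ne_of_lt (hcp (Fin.mk_lt_mk.mpr (by omega))))
        · exact Or.inr (ne_of_lt (hcq (Fin.mk_lt_mk.mpr (by omega))))
    · intro i
      exact B.primeF_isPrime C (hcpP _) (hcqP _)
  · -- every chain has length at most `a + b`
    intro k c hc hcP
    classical
    set p : Fin (k + 1) → Set X :=
      fun i => {x | Quotient.mk (collapseSetoid (B.inftyPairs C)) (x, C.zero) ∈ c i} with hp
    set q : Fin (k + 1) → Set Y :=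
      fun i => {y | Quotient.mk (collapseSetoid (B.inftyPairs C)) (B.zero, y) ∈ c i} with hq
    have hdec : ∀ i, B.IsPrime (p i) ∧ C.IsPrime (q i) ∧ c i = B.primeF C (p i) (q i) :=
      fun i => B.prime_decomp C (hcP i)
    have hpm : Monotone p := by
      intro i j hij x hx
      exact hc.monotone hij hx
    have hqm : Monotone q := by
      intro i j hij y hy
      exact hc.monotone hij hy
    have h1 : (Finset.univ.filter (fun i : Fin k => p i.castSucc ≠ p i.succ)).card ≤ a :=
      B.jumps_le hAub p hpm (fun i => (hdec i).1)
    have h2 : (Finset.univ.filter (fun i : Fin k => q i.castSucc ≠ q i.succ)).card ≤ b :=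
      C.jumps_le hBub q hqm (fun i => (hdec i).2.1)
    have hcover : (Finset.univ : Finset (Fin k)) ⊆
        (Finset.univ.filter (fun i : Fin k => p i.castSucc ≠ p i.succ)) ∪
        (Finset.univ.filter (fun i : Fin k => q i.castSucc ≠ q i.succ)) := by
      intro i _
      rw [Finset.mem_union, Finset.mem_filter, Finset.mem_filter]
      by_contra hcon
      push_neg at hcon
      have hpe : p i.castSucc = p i.succ := by
        by_contra hne
        exact hne (hcon.1 (Finset.mem_univ i))
      have hqe : q i.castSucc = q i.succ := by
        by_contra hne
        exact hne (hcon.2 (Finset.mem_univ i))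
      have hce : c i.castSucc = c i.succ := by
        rw [(hdec i.castSucc).2.2, (hdec i.succ).2.2, hpe, hqe]
      exact absurd hce (ne_of_lt (hc (show i.castSucc < i.succ from Fin.castSucc_lt_succ)))
    calc k = (Finset.univ : Finset (Fin k)).card := by simp
      _ ≤ ((Finset.univ.filter (fun i : Fin k => p i.castSucc ≠ p i.succ)) ∪
            (Finset.univ.filter (fun i : Fin k => q i.castSucc ≠ q i.succ))).card :=
        Finset.card_le_card hcover
      _ ≤ (Finset.univ.filter (fun i : Fin k => p i.castSucc ≠ p i.succ)).card +
            (Finset.univ.filter (fun i : Fin k => q i.castSucc ≠ q i.succ)).card :=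
        Finset.card_union_le _ _
      _ ≤ a + b := Nat.add_le_add h1 h2
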